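/- Let E be a quantum channel on d×d matrices and ρ a density matrix such that E(C(ρ)) is the same state for every channel C whose Kraus operators are all symmetric matrices. Then E(C(ρ)) = E(I/d) for every such C. -/

import Mathlib

open Matrix BigOperators
open scoped ComplexOrder

/-- A map is a symmetric-Kraus channel if it admits a Kraus representation in which every
Kraus operator is a symmetric matrix, and these Kraus operators are trace-preserving. -/
def IsSymChan {d : ℕ} (f : Matrix (Fin d) (Fin d) ℂ → Matrix (Fin d) (Fin d) ℂ) : Prop :=
  ∃ (r : ℕ) (K : Fin r → Matrix (Fin d) (Fin d) ℂ),
    (∀ i, (K i)ᵀ = K i) ∧ (∑ i, (K i)ᴴ * K i = 1) ∧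
    ∀ ρ, f ρ = ∑ i, K i * ρ * (K i)ᴴ

namespace SymChanAux

variable {d : ℕ}

/-- Standard basis matrix with a `1` entry at `(i,j)`. -/
noncomputable def Em (i j : Fin d) : Matrix (Fin d) (Fin d) ℂ := single i j 1

lemma Em_conjT (i j : Fin d) : (Em i j)ᴴ = Em j i := by
  ext a b
  simp [Em, conjTranspose_apply, single, and_comm]

lemma Em_transp (i j : Fin d) : (Em i j)ᵀ = Em j i := by
  ext a b
  simp [Em, transpose_apply, single, and_comm]

lemma Em_mul_same (i j k : Fin d) : Em i j * Em j k = Em i k := by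
  unfold Em
  rw [single_mul_single_same]
  norm_num

lemma Em_mul_ne {j k : Fin d} (h : j ≠ k) (i l : Fin d) : Em i j * Em k l = 0 :=
  single_mul_single_of_ne (1:ℂ) i j k h 1

lemma mul3 (i j k l : Fin d) (ρ : Matrix (Fin d) (Fin d) ℂ) :
    Em i j * ρ * Em k l = ρ j k • Em i l := by
  unfold Em
  ext a b
  by_cases hb : b = l
  · subst hb
    rw [mul_single_apply_same]
    by_cases ha : a = i
    · subst ha; simp
    · rw [show (single i j (1:ℂ) * ρ) a k = 0 from
        single_mul_apply_of_ne 1 i j a k ha ρ]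
      simp only [Matrix.smul_apply, single, of_apply]
      rw [if_neg (by rintro ⟨h, -⟩; exact ha h.symm)]
      simp
  · rw [mul_single_apply_of_ne 1 k l a b hb (single i j 1 * ρ)]
    simp only [Matrix.smul_apply, single, of_apply]
    rw [if_neg (by rintro ⟨-, h⟩; exact hb h.symm)]
    simp

lemma sum_Em : ∑ i : Fin d, Em i i = (1 : Matrix (Fin d) (Fin d) ℂ) := by
  ext a b
  simp [Em, Matrix.sum_apply, single, one_apply, ite_and, Finset.sum_ite_eq, eq_comm]

lemma sum_pair_of_support {M : Type*} [AddCommMonoid M] {m n : Fin d} (h : m ≠ n)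
    (f : Fin d → M) (h0 : ∀ i, i ≠ m → i ≠ n → f i = 0) : ∑ i, f i = f m + f n := by
  classical
  rw [← Finset.sum_subset (Finset.subset_univ ({m, n} : Finset (Fin d)))]
  · rw [Finset.sum_pair h]
  · intro x _ hx
    simp only [Finset.mem_insert, Finset.mem_singleton, not_or] at hx
    exact h0 x hx.1 hx.2

/-- The channel associated to a Kraus family. -/
noncomputable def chan {r : ℕ} (K : Fin r → Matrix (Fin d) (Fin d) ℂ)
    (ρ : Matrix (Fin d) (Fin d) ℂ) : Matrix (Fin d) (Fin d) ℂ :=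
  ∑ i, K i * ρ * (K i)ᴴ

lemma isSymChan_chan {r : ℕ} (K : Fin r → Matrix (Fin d) (Fin d) ℂ)
    (h1 : ∀ i, (K i)ᵀ = K i) (h2 : ∑ i, (K i)ᴴ * K i = 1) : IsSymChan (chan K) :=
  ⟨r, K, h1, h2, fun _ => rfl⟩

/-- The pinching Kraus family. -/
noncomputable def pinchK : Fin d → Matrix (Fin d) (Fin d) ℂ := fun i => Em i i

lemma isSymChan_pinchK : IsSymChan (chan (pinchK (d := d))) :=
  isSymChan_chan _ (fun i => Em_transp i i)
    (by simp [pinchK, Em_conjT, Em_mul_same, sum_Em])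

lemma chan_pinchK (ρ : Matrix (Fin d) (Fin d) ℂ) :
    chan pinchK ρ = ∑ i, ρ i i • Em i i := by
  simp [chan, pinchK, Em_conjT, mul3]

/- Rotated rank-one projectors on the plane spanned by coordinates `m`, `n`. -/
noncomputable def P1 (m n : Fin d) : Matrix (Fin d) (Fin d) ℂ :=
  (2:ℂ)⁻¹ • (Em m m + Em m n + Em n m + Em n n)
noncomputable def Q1 (m n : Fin d) : Matrix (Fin d) (Fin d) ℂ :=
  (2:ℂ)⁻¹ • (Em m m - Em m n - Em n m + Em n n)
noncomputable def P2 (m n : Fin d) : Matrix (Fin d) (Fin d) ℂ :=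
  (5:ℂ)⁻¹ • ((4:ℂ) • Em m m + (2:ℂ) • Em m n + (2:ℂ) • Em n m + Em n n)
noncomputable def Q2 (m n : Fin d) : Matrix (Fin d) (Fin d) ℂ :=
  (5:ℂ)⁻¹ • (Em m m - (2:ℂ) • Em m n - (2:ℂ) • Em n m + (4:ℂ) • Em n n)

variable (m n : Fin d)

lemma P1_conjT : (P1 m n)ᴴ = P1 m n := by
  simp only [P1, conjTranspose_smul, conjTranspose_add, Em_conjT, star_inv₀, star_ofNat]
  module

lemma Q1_conjT : (Q1 m n)ᴴ = Q1 m n := by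
  simp only [Q1, conjTranspose_smul, conjTranspose_add, conjTranspose_sub, Em_conjT,
    star_inv₀, star_ofNat]
  module

lemma P2_conjT : (P2 m n)ᴴ = P2 m n := by
  simp only [P2, conjTranspose_smul, conjTranspose_add, Em_conjT, star_inv₀, star_ofNat]
  module

lemma Q2_conjT : (Q2 m n)ᴴ = Q2 m n := by
  simp only [Q2, conjTranspose_smul, conjTranspose_add, conjTranspose_sub, Em_conjT,
    star_inv₀, star_ofNat]
  module

lemma P1_transp : (P1 m n)ᵀ = P1 m n := by
  simp only [P1, transpose_smul, transpose_add, Em_transp]; module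
lemma Q1_transp : (Q1 m n)ᵀ = Q1 m n := by
  simp only [Q1, transpose_smul, transpose_add, transpose_sub, Em_transp]; module
lemma P2_transp : (P2 m n)ᵀ = P2 m n := by
  simp only [P2, transpose_smul, transpose_add, Em_transp]; module
lemma Q2_transp : (Q2 m n)ᵀ = Q2 m n := by
  simp only [Q2, transpose_smul, transpose_add, transpose_sub, Em_transp]; module

/-- The rotated-basis pinching channels. -/
noncomputable def K1 (m n : Fin d) : Fin d → Matrix (Fin d) (Fin d) ℂ := fun i =>
  if i = m then P1 m n else if i = n then Q1 m n else Em i i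
noncomputable def K2 (m n : Fin d) : Fin d → Matrix (Fin d) (Fin d) ℂ := fun i =>
  if i = m then P2 m n else if i = n then Q2 m n else Em i i

lemma K1_transp : ∀ i, (K1 m n i)ᵀ = K1 m n i := by
  intro i
  unfold K1
  split_ifs
  · exact P1_transp m n
  · exact Q1_transp m n
  · exact Em_transp i i

lemma K2_transp : ∀ i, (K2 m n i)ᵀ = K2 m n i := by
  intro i
  unfold K2
  split_ifs
  · exact P2_transp m n
  · exact Q2_transp m n
  · exact Em_transp i i

lemma K1_sum (hmn : m ≠ n) : ∑ i, (K1 m n i)ᴴ * K1 m n i = 1 := by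
  have hs : P1 m n * P1 m n + Q1 m n * Q1 m n = Em m m + Em n n := by
    have hnm : n ≠ m := hmn.symm
    simp only [P1, Q1, smul_mul_assoc, mul_smul_comm, add_mul, sub_mul, mul_add, mul_sub,
      Em_mul_same, Em_mul_ne hmn, Em_mul_ne hnm]
    match_scalars <;> ring
  have h : ∑ i, ((K1 m n i)ᴴ * K1 m n i - Em i i) = 0 := by
    rw [sum_pair_of_support hmn _ (fun i him hin => by
      simp [K1, him, hin, Em_conjT, Em_mul_same])]
    have e1 : K1 m n m = P1 m n := by simp [K1]
    have e2 : K1 m n n = Q1 m n := by simp [K1, hmn.symm]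
    rw [e1, e2, P1_conjT, Q1_conjT, sub_add_sub_comm, hs, sub_self]
  rw [Finset.sum_sub_distrib] at h
  rw [sub_eq_zero.mp h, sum_Em]

lemma K2_sum (hmn : m ≠ n) : ∑ i, (K2 m n i)ᴴ * K2 m n i = 1 := by
  have hs : P2 m n * P2 m n + Q2 m n * Q2 m n = Em m m + Em n n := by
    have hnm : n ≠ m := hmn.symm
    simp only [P2, Q2, smul_mul_assoc, mul_smul_comm, add_mul, sub_mul, mul_add, mul_sub,
      Em_mul_same, Em_mul_ne hmn, Em_mul_ne hnm, smul_zero]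
    match_scalars <;> ring
  have h : ∑ i, ((K2 m n i)ᴴ * K2 m n i - Em i i) = 0 := by
    rw [sum_pair_of_support hmn _ (fun i him hin => by
      simp [K2, him, hin, Em_conjT, Em_mul_same])]
    have e1 : K2 m n m = P2 m n := by simp [K2]
    have e2 : K2 m n n = Q2 m n := by simp [K2, hmn.symm]
    rw [e1, e2, P2_conjT, Q2_conjT, sub_add_sub_comm, hs, sub_self]
  rw [Finset.sum_sub_distrib] at h
  rw [sub_eq_zero.mp h, sum_Em]

lemma diff1 (hmn : m ≠ n) (ρ : Matrix (Fin d) (Fin d) ℂ) :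
    chan pinchK ρ - chan (K1 m n) ρ =
      ((ρ m m - ρ n n)/2) • (Em m m - Em n n)
        - ((ρ m n + ρ n m)/2) • (Em m n + Em n m) := by
  rw [chan, chan, ← Finset.sum_sub_distrib,
    sum_pair_of_support hmn _ (fun i him hin => by simp [pinchK, K1, him, hin])]
  have e1 : K1 m n m = P1 m n := by simp [K1]
  have e2 : K1 m n n = Q1 m n := by simp [K1, hmn.symm]
  simp only [pinchK, e1, e2, P1_conjT, Q1_conjT, Em_conjT]
  simp only [P1, Q1, smul_mul_assoc, mul_smul_comm, add_mul, sub_mul, mul_add, mul_sub,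
    mul3, smul_smul, smul_add, smul_sub]
  match_scalars <;> ring

lemma diff2 (hmn : m ≠ n) (ρ : Matrix (Fin d) (Fin d) ℂ) :
    chan pinchK ρ - chan (K2 m n) ρ =
      ((8*(ρ m m - ρ n n) - 6*(ρ m n + ρ n m))/25) • (Em m m - Em n n)
        - ((6*(ρ m m - ρ n n) + 8*(ρ m n + ρ n m))/25) • (Em m n + Em n m) := by
  rw [chan, chan, ← Finset.sum_sub_distrib,
    sum_pair_of_support hmn _ (fun i him hin => by simp [pinchK, K2, him, hin])]
  have e1 : K2 m n m = P2 m n := by simp [K2]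
  have e2 : K2 m n n = Q2 m n := by simp [K2, hmn.symm]
  simp only [pinchK, e1, e2, P2_conjT, Q2_conjT, Em_conjT]
  simp only [P2, Q2, smul_mul_assoc, mul_smul_comm, add_mul, sub_mul, mul_add, mul_sub,
    mul3, smul_smul, smul_add, smul_sub]
  match_scalars <;> ring

/-- The key algebraic identity: a suitable combination of output differences isolates
the diagonal transfer matrix `Em m m - Em n n`. -/
lemma keyId (hmn : m ≠ n) (ρ : Matrix (Fin d) (Fin d) ℂ) :
    (3*((ρ m m - ρ n n)/2) + 4*((ρ m n + ρ n m)/2)) • (chan pinchK ρ - chan (K1 m n) ρ)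
      - (25*((ρ m n + ρ n m)/2)/4) • (chan pinchK ρ - chan (K2 m n) ρ)
    = (3*(((ρ m m - ρ n n)/2)^2 + ((ρ m n + ρ n m)/2)^2)) • (Em m m - Em n n) := by
  rw [diff1 m n hmn, diff2 m n hmn]
  match_scalars <;> ring

lemma lem_sum (hdc : (d:ℂ) ≠ 0) (ρ : Matrix (Fin d) (Fin d) ℂ) (htr : ∑ i, ρ i i = 1) :
    ∑ m : Fin d, ∑ n : Fin d, ((ρ m m - ρ n n)/(2*d)) • (Em m m - Em n n)
      = chan pinchK ρ - (d:ℂ)⁻¹ • (1 : Matrix (Fin d) (Fin d) ℂ) := by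
  have h1 : ∀ m : Fin d, ∑ n : Fin d, ((ρ m m - ρ n n)/(2*(d:ℂ))) = (d*ρ m m - 1)/(2*d) := by
    intro m
    rw [← Finset.sum_div, Finset.sum_sub_distrib, htr, Finset.sum_const, Finset.card_univ,
      Fintype.card_fin, nsmul_eq_mul]
  have h2 : ∀ n : Fin d, ∑ m : Fin d, ((ρ m m - ρ n n)/(2*(d:ℂ))) = (1 - d*ρ n n)/(2*d) := by
    intro n
    rw [← Finset.sum_div, Finset.sum_sub_distrib, htr, Finset.sum_const, Finset.card_univ,
      Fintype.card_fin, nsmul_eq_mul]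
  have step1 : ∑ m : Fin d, ∑ n : Fin d, ((ρ m m - ρ n n)/(2*(d:ℂ))) • (Em m m - Em n n)
      = ∑ m : Fin d, ((d*ρ m m - 1)/(2*(d:ℂ))) • Em m m
        - ∑ n : Fin d, ((1 - d*ρ n n)/(2*(d:ℂ))) • Em n n := by
    have inner : ∀ m : Fin d, ∑ n : Fin d, ((ρ m m - ρ n n)/(2*(d:ℂ))) • (Em m m - Em n n)
        = ((d*ρ m m - 1)/(2*(d:ℂ))) • Em m m
          - ∑ n : Fin d, ((ρ m m - ρ n n)/(2*(d:ℂ))) • Em n n := by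
      intro m
      simp only [smul_sub]
      rw [Finset.sum_sub_distrib, ← Finset.sum_smul, h1]
    rw [Finset.sum_congr rfl (fun m _ => inner m), Finset.sum_sub_distrib]
    congr 1
    rw [Finset.sum_comm]
    exact Finset.sum_congr rfl (fun n _ => by rw [← Finset.sum_smul, h2])
  rw [step1, chan_pinchK, ← sum_Em, Finset.smul_sum, ← Finset.sum_sub_distrib,
    ← Finset.sum_sub_distrib]
  refine Finset.sum_congr rfl (fun m _ => ?_)
  rw [← sub_smul, ← sub_smul]
  congr 1
  field_simp
  ring

lemma real_sq_zero {g t : ℂ} (hg : star g = g) (ht : star t = t) (h : g^2 + t^2 = 0) :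
    g = 0 := by
  have hgim : g.im = 0 := Complex.conj_eq_iff_im.mp hg
  have htim : t.im = 0 := Complex.conj_eq_iff_im.mp ht
  have hre : g.re^2 + t.re^2 = 0 := by
    have := congrArg Complex.re h
    simpa [pow_two, Complex.mul_re, hgim, htim] using this
  have : g.re = 0 := by nlinarith [sq_nonneg g.re, sq_nonneg t.re]
  exact Complex.ext this hgim

end SymChanAux

open SymChanAux in
/-- If a quantum channel `E` gives the same output `E(C(ρ))` for every channel `C` with
all-symmetric Kraus operators, then that output is `E(I/d)`. -/
theorem output_eq_of_constant_on_symmetric_channels {d e : ℕ} (hd : 0 < d)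
    (E : Matrix (Fin d) (Fin d) ℂ → Matrix (Fin e) (Fin e) ℂ)
    (hE : ∃ (r : ℕ) (K : Fin r → Matrix (Fin e) (Fin d) ℂ),
      (∑ i, (K i)ᴴ * K i = 1) ∧ ∀ ρ, E ρ = ∑ i, K i * ρ * (K i)ᴴ)
    (ρ : Matrix (Fin d) (Fin d) ℂ) (hρ : ρ.PosSemidef) (htr : ρ.trace = 1)
    (hconst : ∀ f g, IsSymChan f → IsSymChan g → E (f ρ) = E (g ρ)) :
    ∀ f, IsSymChan f → E (f ρ) = E ((d : ℂ)⁻¹ • (1 : Matrix (Fin d) (Fin d) ℂ)) := by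
  classical
  obtain ⟨r, K, hKsum, hKrep⟩ := hE
  set L : Matrix (Fin d) (Fin d) ℂ →ₗ[ℂ] Matrix (Fin e) (Fin e) ℂ :=
    { toFun := fun A => ∑ i, K i * A * (K i)ᴴ
      map_add' := fun A B => by
        simp [Matrix.mul_add, Matrix.add_mul, Finset.sum_add_distrib]
      map_smul' := fun c A => by
        simp [Matrix.mul_smul, Matrix.smul_mul, Finset.smul_sum] } with hLdef
  have hEL : ∀ A, E A = L A := fun A => hKrep A
  intro f hf
  have hpinchS : IsSymChan (chan (pinchK (d := d))) := isSymChan_pinchK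
  have hK1S : ∀ m n : Fin d, m ≠ n → IsSymChan (chan (K1 m n)) := fun m n h =>
    isSymChan_chan _ (K1_transp m n) (K1_sum m n h)
  have hK2S : ∀ m n : Fin d, m ≠ n → IsSymChan (chan (K2 m n)) := fun m n h =>
    isSymChan_chan _ (K2_transp m n) (K2_sum m n h)
  rw [hconst f (chan pinchK) hf hpinchS]
  have hsa : ∀ a b : Fin d, star (ρ a b) = ρ b a := fun a b => by
    simpa [conjTranspose_apply] using congrFun (congrFun hρ.1 b) a
  have hdc : (d:ℂ) ≠ 0 := Nat.cast_ne_zero.mpr hd.ne'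
  have htr' : ∑ i, ρ i i = 1 := by simpa [Matrix.trace, Matrix.diag] using htr
  -- each pair contributes zero
  have hzero : ∀ m n : Fin d,
      ((ρ m m - ρ n n)/(2*(d:ℂ))) • L (Em m m - Em n n) = 0 := by
    intro m n
    by_cases hmn : m = n
    · subst hmn; simp
    by_cases hg : ρ m m - ρ n n = 0
    · simp [hg]
    · -- the key identity, mapped through L
      have h1 : L (chan pinchK ρ) = L (chan (K1 m n) ρ) := by
        rw [← hEL, ← hEL]; exact hconst _ _ hpinchS (hK1S m n hmn)
      have h2 : L (chan pinchK ρ) = L (chan (K2 m n) ρ) := by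
        rw [← hEL, ← hEL]; exact hconst _ _ hpinchS (hK2S m n hmn)
      have hkey := congrArg L (keyId m n hmn ρ)
      simp only [map_sub, _root_.map_smul] at hkey
      rw [sub_eq_zero_of_eq h1, sub_eq_zero_of_eq h2, smul_zero, smul_zero, sub_self] at hkey
      -- realness of the coefficients
      have hgstar : star ((ρ m m - ρ n n)/2) = (ρ m m - ρ n n)/2 := by
        simp [star_div₀, hsa m m, hsa n n]
      have htstar : star ((ρ m n + ρ n m)/2) = (ρ m n + ρ n m)/2 := by
        simp [star_div₀, hsa m n, hsa n m, add_comm]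
      have hcoef : (3*(((ρ m m - ρ n n)/2)^2 + ((ρ m n + ρ n m)/2)^2)) ≠ 0 := by
        intro h0
        have h3 : (3:ℂ) ≠ 0 := by norm_num
        have h1' : ((ρ m m - ρ n n)/2)^2 + ((ρ m n + ρ n m)/2)^2 = 0 :=
          (mul_eq_zero.mp h0).resolve_left h3
        have := real_sq_zero hgstar htstar h1'
        exact hg (by
          field_simp at this
          simpa using this)
      have hLZ : L (Em m m) - L (Em n n) = 0 := by
        rcases smul_eq_zero.mp hkey.symm with h | h
        · exact absurd h hcoef
        · exact h
      rw [map_sub, hLZ, smul_zero]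
  -- assemble
  have hfinal : L (chan pinchK ρ) - L ((d:ℂ)⁻¹ • (1 : Matrix (Fin d) (Fin d) ℂ)) = 0 := by
    rw [← map_sub, ← lem_sum hdc ρ htr', map_sum]
    refine Finset.sum_eq_zero fun m _ => ?_
    rw [map_sum]
    refine Finset.sum_eq_zero fun n _ => ?_
    rw [_root_.map_smul]
    exact hzero m n
  rw [hEL, hEL]
  exact sub_eq_zero.mp hfinal
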